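/- Assume δ ≤ θ ≤ α. Then there exists a constant C > 0 (depending only on δ, α, θ, ε, and independent of ξ, σ, z, w) such that for every ξ ∈ ℝⁿ with |ξ| ≥ ε, every σ ∈ ℝ, and all complex numbers z, w: E₁ ≤ C·F, where F = |ξ|^{2θ+σ}|w|² + ρ(ξ)|ξ|^{2α+σ}|z|². -/

import Mathlib

/-- The auxiliary multiplier `ρ(ξ)` used in the high frequency region. -/
noncomputable def rho (n : ℕ) (δ α θ ε : ℝ) (ξ : EuclideanSpace ℝ (Fin n)) : ℝ :=
  if 2 * θ ≤ α + δ then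
    ε ^ (2 * α + 2 * δ - 4 * θ) * ‖ξ‖ ^ (2 * θ) / (2 * (1 + ‖ξ‖ ^ (2 * δ)))
  else
    ε ^ (-2 * α + 4 * θ) * ‖ξ‖ ^ (2 * α - 2 * θ) / 4

theorem stmt_15 (n : ℕ) (hn : 1 ≤ n) (δ α θ ε : ℝ)
    (hδ : 0 ≤ δ) (hα : 0 ≤ α) (hθ0 : 0 ≤ θ) (hθα : θ ≤ α)
    (hε0 : 0 < ε) (hε1 : ε < 1) (hδθ : δ ≤ θ) :
    ∃ C : ℝ, 0 < C ∧
      ∀ ξ : EuclideanSpace ℝ (Fin n), ε ≤ ‖ξ‖ → ∀ σ : ℝ, ∀ z w : ℂ,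
        1 / 2 * ‖ξ‖ ^ (2 * δ + σ) * ‖w‖ ^ 2
            + 1 / 2 * ‖ξ‖ ^ (2 * α + σ) * ‖z‖ ^ 2
          ≤ C * (‖ξ‖ ^ (2 * θ + σ) * ‖w‖ ^ 2
            + rho n δ α θ ε ξ * ‖ξ‖ ^ (2 * α + σ) * ‖z‖ ^ 2) := by
  set c : ℝ := min (ε ^ (2*α + 2*δ - 2*θ) / 4) (ε ^ (2*θ) / 4) with hc
  have hcpos : 0 < c := lt_min (by positivity) (by positivity)
  set C : ℝ := max (ε ^ (2*δ - 2*θ) / 2) (1 / (2*c)) with hCdef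
  have hCpos : 0 < C := lt_of_lt_of_le (by positivity) (le_max_left _ _)
  refine ⟨C, hCpos, ?_⟩
  intro ξ hξ σ z w
  have hξ0 : 0 < ‖ξ‖ := lt_of_lt_of_le hε0 hξ
  -- rho is bounded below by c
  have hρ : c ≤ rho n δ α θ ε ξ := by
    unfold rho
    split_ifs with h
    · refine le_trans (min_le_left _ _) ?_
      have e1 : ε ^ (2*θ) ≤ ‖ξ‖ ^ (2*θ) := Real.rpow_le_rpow hε0.le hξ (by linarith)
      have e2 : ε ^ (2*θ) * ‖ξ‖ ^ (2*δ) ≤ ‖ξ‖ ^ (2*θ) := by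
        have hsplit : ε ^ (2*θ) = ε ^ (2*δ) * ε ^ (2*θ - 2*δ) := by
          rw [← Real.rpow_add hε0]; ring_nf
        rw [hsplit]
        have e3 : ε ^ (2*δ) ≤ 1 := Real.rpow_le_one hε0.le hε1.le (by linarith)
        have e4 : ε ^ (2*θ - 2*δ) ≤ ‖ξ‖ ^ (2*θ - 2*δ) :=
          Real.rpow_le_rpow hε0.le hξ (by linarith)
        calc ε ^ (2*δ) * ε ^ (2*θ - 2*δ) * ‖ξ‖ ^ (2*δ)
            ≤ 1 * ‖ξ‖ ^ (2*θ - 2*δ) * ‖ξ‖ ^ (2*δ) :=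
              mul_le_mul_of_nonneg_right
                (mul_le_mul e3 e4 (Real.rpow_nonneg hε0.le _) zero_le_one)
                (Real.rpow_nonneg hξ0.le _)
          _ = ‖ξ‖ ^ (2*θ) := by
              rw [one_mul, ← Real.rpow_add hξ0]; ring_nf
      have hsplit2 : ε ^ (2*α + 2*δ - 2*θ) = ε ^ (2*α + 2*δ - 4*θ) * ε ^ (2*θ) := by
        rw [← Real.rpow_add hε0]; ring_nf
      rw [hsplit2, div_le_div_iff₀ (by norm_num) (by positivity)]
      have hnn : 0 ≤ ε ^ (2*α + 2*δ - 4*θ) := Real.rpow_nonneg hε0.le _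
      nlinarith [hnn, e1, e2]
    · refine le_trans (min_le_right _ _) ?_
      have e5 : ε ^ (2*α - 2*θ) ≤ ‖ξ‖ ^ (2*α - 2*θ) :=
        Real.rpow_le_rpow hε0.le hξ (by linarith)
      have hsplit3 : ε ^ (2*θ) = ε ^ (-2*α + 4*θ) * ε ^ (2*α - 2*θ) := by
        rw [← Real.rpow_add hε0]; ring_nf
      rw [hsplit3]
      have hnn : 0 ≤ ε ^ (-2*α + 4*θ) := Real.rpow_nonneg hε0.le _
      have := mul_le_mul_of_nonneg_left e5 hnn
      linarith
  have hw2 : (0:ℝ) ≤ ‖w‖ ^ 2 := by positivity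
  have hz2 : (0:ℝ) ≤ ‖z‖ ^ 2 := by positivity
  -- first term
  have b1 : 1 / 2 * ‖ξ‖ ^ (2 * δ + σ) * ‖w‖ ^ 2
      ≤ C * (‖ξ‖ ^ (2 * θ + σ) * ‖w‖ ^ 2) := by
    have hsplit : ‖ξ‖ ^ (2*δ + σ) = ‖ξ‖ ^ (2*δ - 2*θ) * ‖ξ‖ ^ (2*θ + σ) := by
      rw [← Real.rpow_add hξ0]; ring_nf
    have e6 : ‖ξ‖ ^ (2*δ - 2*θ) ≤ ε ^ (2*δ - 2*θ) :=
      Real.rpow_le_rpow_of_nonpos hε0 hξ (by linarith)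
    have hC1 : ε ^ (2*δ - 2*θ) / 2 ≤ C := le_max_left _ _
    have ht : 0 ≤ ‖ξ‖ ^ (2*θ + σ) := Real.rpow_nonneg hξ0.le _
    rw [hsplit]
    nlinarith [mul_le_mul_of_nonneg_right (mul_le_mul_of_nonneg_right e6 ht) hw2,
      mul_le_mul_of_nonneg_right (mul_le_mul_of_nonneg_right hC1 ht) hw2]
  -- second term
  have b2 : 1 / 2 * ‖ξ‖ ^ (2 * α + σ) * ‖z‖ ^ 2
      ≤ C * (rho n δ α θ ε ξ * ‖ξ‖ ^ (2 * α + σ) * ‖z‖ ^ 2) := by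
    have hC2 : 1 / (2*c) ≤ C := le_max_right _ _
    have hCρ : (1:ℝ) / 2 ≤ C * rho n δ α θ ε ξ := by
      have h5 : 1 / (2*c) * c ≤ C * rho n δ α θ ε ξ :=
        mul_le_mul hC2 hρ hcpos.le hCpos.le
      have h6 : 1 / (2*c) * c = 1/2 := by field_simp
      linarith
    have ht : 0 ≤ ‖ξ‖ ^ (2*α + σ) * ‖z‖ ^ 2 := by positivity
    calc 1 / 2 * ‖ξ‖ ^ (2 * α + σ) * ‖z‖ ^ 2
        = 1 / 2 * (‖ξ‖ ^ (2 * α + σ) * ‖z‖ ^ 2) := by ring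
      _ ≤ C * rho n δ α θ ε ξ * (‖ξ‖ ^ (2 * α + σ) * ‖z‖ ^ 2) :=
          mul_le_mul_of_nonneg_right hCρ ht
      _ = C * (rho n δ α θ ε ξ * ‖ξ‖ ^ (2 * α + σ) * ‖z‖ ^ 2) := by ring
  calc 1 / 2 * ‖ξ‖ ^ (2 * δ + σ) * ‖w‖ ^ 2
        + 1 / 2 * ‖ξ‖ ^ (2 * α + σ) * ‖z‖ ^ 2
      ≤ C * (‖ξ‖ ^ (2 * θ + σ) * ‖w‖ ^ 2)
        + C * (rho n δ α θ ε ξ * ‖ξ‖ ^ (2 * α + σ) * ‖z‖ ^ 2) :=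
        add_le_add b1 b2
    _ = C * (‖ξ‖ ^ (2 * θ + σ) * ‖w‖ ^ 2
        + rho n δ α θ ε ξ * ‖ξ‖ ^ (2 * α + σ) * ‖z‖ ^ 2) := by ring
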